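/- Let R = ℤ[X,Y]/(Y² − X³ − 5X − 10), let p be the maximal ideal of R generated by the images of 2, X and Y, and let O be the localization of R at p. Then the length of the O-module O/(Y − 16, Y + 16)·O equals 5. (This is the local intersection number m₂₄ = i_{x₂₄}(S₂, S₄) of the Zariski closures of S₂ = (6,−16) and S₄ = (6,16) at their intersection point x₂₄ above the prime 2.) -/

import Mathlib

set_option maxHeartbeats 1000000
set_option synthInstance.maxHeartbeats 400000


open MvPolynomial

/-- The affine coordinate ring `R = ℤ[X,Y]/(Y² − X³ − 5X − 10)` of the elliptic
curve `E : y² = x³ + 5x + 10` over `ℤ`, with `ℤ[X,Y]` realized as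
`MvPolynomial (Fin 2) ℤ`, `X = X 0` and `Y = X 1`. -/
noncomputable abbrev R : Type :=
  MvPolynomial (Fin 2) ℤ ⧸
    Ideal.span {(X 1 : MvPolynomial (Fin 2) ℤ) ^ 2 - (X 0) ^ 3 - 5 * X 0 - 10}

/-- The image of `X` in `R`. -/
noncomputable def x : R := Ideal.Quotient.mk _ (X 0)

/-- The image of `Y` in `R`. -/
noncomputable def y : R := Ideal.Quotient.mk _ (X 1)

/-- The ideal of `R` generated by the images of `2`, `X` and `Y`, corresponding to
the intersection point `x₂₄` of the closures of `S₂ = (6,−16)` and `S₄ = (6,16)`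
above the prime `2`. -/
noncomputable def p : Ideal R := Ideal.span {(2 : R), x, y}

namespace EC

noncomputable def rel : MvPolynomial (Fin 2) ℤ :=
  (X 1 : MvPolynomial (Fin 2) ℤ) ^ 2 - (X 0) ^ 3 - 5 * X 0 - 10

noncomputable def mk0 : MvPolynomial (Fin 2) ℤ →+* R := Ideal.Quotient.mk _

noncomputable def ev32 : MvPolynomial (Fin 2) ℤ →+* ZMod 32 :=
  (eval₂Hom (Int.castRingHom (ZMod 32)) ![6, 16] : _ →+* _)

noncomputable def ev2 : MvPolynomial (Fin 2) ℤ →+* ZMod 2 :=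
  (eval₂Hom (Int.castRingHom (ZMod 2)) ![0, 0] : _ →+* _)

lemma ev32_rel : ev32 rel = 0 := by
  simp [ev32, rel]
  decide

lemma ev2_rel : ev2 rel = 0 := by
  simp [ev2, rel]
  decide

noncomputable def φ : R →+* ZMod 32 :=
  Ideal.Quotient.lift _ ev32 (by
    intro a ha
    rw [Ideal.mem_span_singleton'] at ha
    obtain ⟨c, rfl⟩ := ha
    rw [map_mul, show ((X 1 : MvPolynomial (Fin 2) ℤ) ^ 2 - (X 0) ^ 3 - 5 * X 0 - 10) = rel from rfl, ev32_rel, mul_zero])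

noncomputable def ψ : R →+* ZMod 2 :=
  Ideal.Quotient.lift _ ev2 (by
    intro a ha
    rw [Ideal.mem_span_singleton'] at ha
    obtain ⟨c, rfl⟩ := ha
    rw [map_mul, show ((X 1 : MvPolynomial (Fin 2) ℤ) ^ 2 - (X 0) ^ 3 - 5 * X 0 - 10) = rel from rfl, ev2_rel, mul_zero])

@[simp] lemma φ_x : φ x = 6 := by simp [φ, x, ev32]
@[simp] lemma φ_y : φ y = 16 := by simp [φ, y, ev32]
@[simp] lemma ψ_x : ψ x = 0 := by simp [ψ, x, ev2]
@[simp] lemma ψ_y : ψ y = 0 := by simp [ψ, y, ev2]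

lemma sub_constantCoeff_mem (f : MvPolynomial (Fin 2) ℤ) :
    f - C (constantCoeff f) ∈ Ideal.span {(X 0 : MvPolynomial (Fin 2) ℤ), X 1} := by
  induction f using MvPolynomial.induction_on with
  | C a => simp
  | add f g hf hg =>
      have : f + g - C (constantCoeff (f + g)) =
          (f - C (constantCoeff f)) + (g - C (constantCoeff g)) := by
        rw [map_add, map_add]; ring
      rw [this]; exact add_mem hf hg
  | mul_X f i hf =>
      have : f * X i - C (constantCoeff (f * X i)) = f * X i := by simp
      rw [this]
      have hXi : (X i : MvPolynomial (Fin 2) ℤ) ∈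
          Ideal.span {(X 0 : MvPolynomial (Fin 2) ℤ), X 1} := by
        fin_cases i
        · exact Ideal.subset_span (by simp)
        · exact Ideal.subset_span (by simp)
      exact Ideal.mul_mem_left _ _ hXi

lemma ker_ev2 (f : MvPolynomial (Fin 2) ℤ) (hf : ev2 f = 0) :
    f ∈ Ideal.span {(2 : MvPolynomial (Fin 2) ℤ), X 0, X 1} := by
  have h1 : ev2 f = ((constantCoeff f : ℤ) : ZMod 2) := by
    have hv : (![0, 0] : Fin 2 → ZMod 2) = fun _ => 0 := by
      funext i; fin_cases i <;> rfl
    rw [show ev2 f = eval₂ (Int.castRingHom (ZMod 2)) ![0, 0] f from rfl,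
      eval₂_eq_eval_map, hv, eval_zero', constantCoeff_map]
    rfl
  have h2 : (2 : ℤ) ∣ constantCoeff f :=
    (ZMod.intCast_zmod_eq_zero_iff_dvd _ 2).mp (h1 ▸ hf)
  obtain ⟨k, hk⟩ := h2
  have hC : C (constantCoeff f) ∈ Ideal.span {(2 : MvPolynomial (Fin 2) ℤ), X 0, X 1} := by
    rw [hk, map_mul]
    exact Ideal.mul_mem_right _ _ (Ideal.subset_span (by simp))
  have hrest : f - C (constantCoeff f) ∈
      Ideal.span {(2 : MvPolynomial (Fin 2) ℤ), X 0, X 1} := by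
    refine Ideal.span_mono ?_ (sub_constantCoeff_mem f)
    intro t ht
    simp only [Set.mem_insert_iff, Set.mem_singleton_iff] at ht ⊢
    tauto
  simpa using add_mem hC hrest

end EC

namespace EC

lemma p_eq_ker : p = RingHom.ker ψ := by
  apply le_antisymm
  · rw [p, Ideal.span_le]
    intro t ht
    simp only [Set.mem_insert_iff, Set.mem_singleton_iff] at ht
    rcases ht with rfl | rfl | rfl
    · show ψ 2 = 0
      rw [map_ofNat]; decide
    · simp [RingHom.mem_ker]
    · simp [RingHom.mem_ker]
  · intro r hr
    obtain ⟨f, rfl⟩ := Ideal.Quotient.mk_surjective r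
    rw [RingHom.mem_ker] at hr
    have hf : ev2 f = 0 := by
      rw [show ψ (Ideal.Quotient.mk _ f) = ev2 f from rfl] at hr
      exact hr
    have hfm := ker_ev2 f hf
    have : Ideal.Quotient.mk _ f ∈
        Ideal.map (Ideal.Quotient.mk (Ideal.span {(X 1 : MvPolynomial (Fin 2) ℤ) ^ 2 - (X 0) ^ 3 - 5 * X 0 - 10}))
          (Ideal.span {(2 : MvPolynomial (Fin 2) ℤ), X 0, X 1}) :=
      Ideal.mem_map_of_mem _ hfm
    rw [Ideal.map_span] at this
    convert this using 2
    rw [p]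
    congr 1
    simp only [Set.image_insert_eq, Set.image_singleton, map_ofNat]
    rfl

lemma hp : p.IsMaximal := by
  have hsurj : Function.Surjective ψ := by
    intro t
    obtain ⟨n, rfl⟩ := ZMod.intCast_surjective t
    exact ⟨(n : R), map_intCast ψ n⟩
  haveI : (⊥ : Ideal (ZMod 2)).IsMaximal := Ideal.bot_isMaximal
  rw [p_eq_ker, RingHom.ker_eq_comap_bot]
  exact Ideal.comap_isMaximal_of_surjective ψ hsurj (K := ⊥)

lemma psi_eq_cast_phi :
    ψ = (ZMod.castHom (by norm_num : (2:ℕ) ∣ 32) (ZMod 2)).comp φ := by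
  apply Ideal.Quotient.ringHom_ext
  apply MvPolynomial.ringHom_ext
  · intro a
    simp [ψ, φ, ev2, ev32, map_intCast]
  · intro i
    fin_cases i
    · simp [ψ, φ, ev2, ev32]
      decide
    · simp [ψ, φ, ev2, ev32]
      decide

lemma isUnit_phi {s : R} (hs : s ∉ p) : IsUnit (φ s) := by
  have h1 : ψ s ≠ 0 := by
    rw [p_eq_ker, RingHom.mem_ker] at hs
    exact hs
  rw [psi_eq_cast_phi, RingHom.comp_apply] at h1
  have key : ∀ u : ZMod 32, ZMod.castHom (by norm_num : (2:ℕ) ∣ 32) (ZMod 2) u ≠ 0 →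
      u * u ^ 15 = 1 := by decide
  exact IsUnit.of_mul_eq_one _ (key _ h1)


noncomputable instance instPrime : p.IsPrime := hp.isPrime

noncomputable abbrev O : Type := Localization.AtPrime p

noncomputable def alg : R →+* O := algebraMap R O

noncomputable def J : @Ideal O Ring.toSemiring := Ideal.span {alg (y - 16), alg (y + 16)}

lemma keyR : (x - 6) * (x + 3) ^ 2 = (y - 16) * (y + 16) + 32 * (6 - x) := by
  have h : mk0 ((X 0 - 6) * (X 0 + 3) ^ 2) =
      mk0 ((X 1 - 16) * (X 1 + 16) + 32 * (6 - X 0)) := by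
    rw [mk0, Ideal.Quotient.mk_eq_mk_iff_sub_mem]
    exact Ideal.mem_span_singleton'.mpr ⟨-1, by ring⟩
  have l1 : (x - 6) * (x + 3) ^ 2 = mk0 ((X 0 - 6) * (X 0 + 3) ^ 2) := by
    simp [mk0, x, map_ofNat]
  have l2 : (y - 16) * (y + 16) + 32 * (6 - x) =
      mk0 ((X 1 - 16) * (X 1 + 16) + 32 * (6 - X 0)) := by
    simp [mk0, x, y, map_ofNat]
  rw [l1, l2, h]

lemma h32J : alg 32 ∈ J := by
  have : alg 32 = alg (y + 16) - alg (y - 16) := by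
    rw [← map_sub alg]
    norm_num
  rw [this]
  exact sub_mem (Ideal.subset_span (by simp [J])) (Ideal.subset_span (by simp [J]))

lemma key_mem : alg (x - 6) * alg ((x + 3) ^ 2) ∈ J := by
  have e1 : alg (x - 6) * alg ((x + 3) ^ 2) =
      alg (y - 16) * alg (y + 16) + alg 32 * alg (6 - x) := by
    simp only [← map_mul, ← map_add]
    rw [keyR]
  rw [e1]
  exact add_mem (Ideal.mul_mem_right _ _ (Ideal.subset_span (by simp [J])))
    (Ideal.mul_mem_right _ _ h32J)

lemma hx6J : alg (x - 6) ∈ J := by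
  have hmem : (x + 3) ^ 2 ∈ p.primeCompl := by
    show (x + 3) ^ 2 ∉ p
    rw [p_eq_ker]
    intro hmm
    rw [RingHom.mem_ker] at hmm
    rw [map_pow, map_add, ψ_x, map_ofNat] at hmm
    revert hmm
    decide
  have hunit : IsUnit (alg ((x + 3) ^ 2)) := IsLocalization.map_units O ⟨_, hmem⟩
  obtain ⟨u, hu⟩ := hunit
  have : alg (x - 6) = alg (x - 6) * alg ((x + 3) ^ 2) * ↑u⁻¹ := by
    rw [← hu, mul_assoc, Units.mul_inv, mul_one]
  rw [this]
  exact Ideal.mul_mem_right _ _ key_mem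


noncomputable def Φ : O →+* ZMod 32 :=
  IsLocalization.lift (M := p.primeCompl) (S := O) (g := φ)
    (fun s => isUnit_phi s.2)

lemma Φ_alg (r : R) : Φ (alg r) = φ r := IsLocalization.lift_eq _ r

noncomputable abbrev Q : Type := O ⧸ J

noncomputable def π : O →+* Q := Ideal.Quotient.mk J

lemma hJker : J ≤ RingHom.ker Φ := by
  rw [J, Ideal.span_le]
  rintro t ht
  simp only [Set.mem_insert_iff, Set.mem_singleton_iff] at ht
  rcases ht with rfl | rfl
  · rw [SetLike.mem_coe, RingHom.mem_ker, Φ_alg, map_sub, φ_y, map_ofNat, sub_self]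
  · rw [SetLike.mem_coe, RingHom.mem_ker, Φ_alg, map_add, φ_y, map_ofNat]
    decide

noncomputable def Φbar : Q →+* ZMod 32 :=
  Ideal.Quotient.lift J Φ (fun a ha => hJker ha)

noncomputable def ΨZ : ℤ →+* Q := π.comp (alg.comp (Int.castRingHom R))

lemma ΨZ_ker : ∀ a ∈ Ideal.span {(32 : ℤ)}, ΨZ a = 0 := by
  intro a ha
  obtain ⟨c, rfl⟩ := Ideal.mem_span_singleton'.mp ha
  have h32 : ΨZ 32 = 0 := by
    have : ((32 : ℤ) : R) = (32 : R) := by norm_cast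
    show π (alg ((32 : ℤ) : R)) = 0
    rw [this]
    exact Ideal.Quotient.eq_zero_iff_mem.mpr h32J
  rw [map_mul, h32, mul_zero]

noncomputable def Ψ : ZMod 32 →+* Q :=
  (Ideal.Quotient.lift (Ideal.span {(32 : ℤ)}) ΨZ ΨZ_ker).comp
    (Int.quotientSpanNatEquivZMod 32).symm.toRingHom

lemma pi_alg_x : π (alg x) = 6 := by
  have h : π (alg (x - 6)) = 0 := Ideal.Quotient.eq_zero_iff_mem.mpr hx6J
  rw [map_sub, map_sub, sub_eq_zero] at h
  rw [h, map_ofNat, map_ofNat]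

lemma pi_alg_y : π (alg y) = 16 := by
  have hm : alg (y - 16) ∈ J := Ideal.subset_span (by simp [J])
  have h : π (alg (y - 16)) = 0 := Ideal.Quotient.eq_zero_iff_mem.mpr hm
  rw [map_sub, map_sub, sub_eq_zero] at h
  rw [h, map_ofNat, map_ofNat]

lemma hcomm : π.comp alg = Ψ.comp φ := by
  apply Ideal.Quotient.ringHom_ext
  apply MvPolynomial.ringHom_ext
  · intro a
    exact RingHom.congr_fun (RingHom.ext_int (((π.comp alg).comp (Ideal.Quotient.mk _)).comp C) (((Ψ.comp φ).comp (Ideal.Quotient.mk _)).comp C)) a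
  · intro i
    fin_cases i
    · show π (alg x) = Ψ (φ x)
      rw [pi_alg_x, φ_x, map_ofNat]
    · show π (alg y) = Ψ (φ y)
      rw [pi_alg_y, φ_y, map_ofNat]

lemma hcomm' (r : _root_.R) : π (alg r) = Ψ (φ r) := RingHom.congr_fun hcomm r

lemma hleft : ∀ a : ZMod 32, Φbar (Ψ a) = a := by
  have h : Φbar.comp Ψ = RingHom.id (ZMod 32) := RingHom.ext_zmod _ _
  intro a
  calc Φbar (Ψ a) = (Φbar.comp Ψ) a := rfl
    _ = a := by rw [h]; rfl

lemma hinj : Function.Injective Ψ := Function.LeftInverse.injective hleft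

lemma hsurj : Function.Surjective Ψ := by
  intro q
  obtain ⟨w, rfl⟩ := Ideal.Quotient.mk_surjective q
  obtain ⟨⟨r, s⟩, rfl⟩ := IsLocalization.mk'_surjective p.primeCompl w
  obtain ⟨u, hu'⟩ := isUnit_phi s.2
  refine ⟨↑u⁻¹ * φ r, ?_⟩
  have hspec : IsLocalization.mk' O r s * alg ↑s = alg r := IsLocalization.mk'_spec O r s
  have hπ : π (IsLocalization.mk' O r s) * Ψ (φ ↑s) = Ψ (φ r) := by
    rw [← hcomm', ← hcomm', ← map_mul, hspec]
  show Ψ (↑u⁻¹ * φ r) = π (IsLocalization.mk' O r s)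
  calc Ψ (↑u⁻¹ * φ r) = Ψ (φ r) * Ψ ↑u⁻¹ := by rw [mul_comm (↑u⁻¹ : ZMod 32) (φ r), map_mul]
    _ = π (IsLocalization.mk' O r s) * (Ψ (φ ↑s) * Ψ ↑u⁻¹) := by rw [← hπ, mul_assoc]
    _ = π (IsLocalization.mk' O r s) * Ψ (φ ↑s * ↑u⁻¹) := by rw [map_mul]
    _ = π (IsLocalization.mk' O r s) := by
        rw [← hu', Units.mul_inv, map_one, mul_one]

lemma hright : ∀ q : Q, Ψ (Φbar q) = q := by
  intro q
  obtain ⟨a, rfl⟩ := hsurj q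
  rw [hleft]


lemma smul_π (w : O) (q : Q) : w • q = π w * q := by
  obtain ⟨v, rfl⟩ := Ideal.Quotient.mk_surjective (I := J) q
  show w • (Ideal.Quotient.mk J v) = π w * π v
  rw [π, ← map_mul]
  rfl

noncomputable def toIdeal (N : Submodule O Q) : Ideal (ZMod 32) where
  carrier := Ψ ⁻¹' N
  add_mem' {a b} ha hb := by
    show Ψ (a + b) ∈ N
    rw [map_add]
    exact N.add_mem ha hb
  zero_mem' := by
    show Ψ 0 ∈ N
    rw [map_zero]
    exact N.zero_mem
  smul_mem' c z hz := by
    show Ψ (c • z) ∈ N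
    rw [smul_eq_mul, map_mul]
    obtain ⟨w, hw⟩ := Ideal.Quotient.mk_surjective (I := J) (Ψ c)
    have hw' : π w = Ψ c := hw
    rw [← hw', ← smul_π]
    exact N.smul_mem w hz

noncomputable def toSub (M : Ideal (ZMod 32)) : Submodule O Q where
  carrier := Ψ '' M
  add_mem' := by
    rintro a b ⟨a', ha, rfl⟩ ⟨b', hb, rfl⟩
    exact ⟨a' + b', M.add_mem ha hb, map_add _ _ _⟩
  zero_mem' := ⟨0, M.zero_mem, map_zero _⟩
  smul_mem' w q hq := by
    obtain ⟨m, hm, rfl⟩ := hq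
    refine ⟨Φbar (π w) * m, M.mul_mem_left _ hm, ?_⟩
    rw [map_mul, hright, smul_π]

noncomputable def G : Submodule O Q ≃o Ideal (ZMod 32) where
  toFun := toIdeal
  invFun := toSub
  left_inv N := by
    apply SetLike.coe_injective
    show Ψ '' (Ψ ⁻¹' (N : Set Q)) = N
    exact Set.image_preimage_eq_of_subset (by intro q _; exact hsurj q)
  right_inv M := by
    apply SetLike.coe_injective
    show Ψ ⁻¹' (Ψ '' (M : Set (ZMod 32))) = M
    exact Set.preimage_image_eq _ hinj
  map_rel_iff' {N₁ N₂} := by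
    constructor
    · intro h q hq
      obtain ⟨a, rfl⟩ := hsurj q
      exact h (show a ∈ Ψ ⁻¹' (N₁ : Set Q) from hq)
    · intro h a ha
      exact h ha

lemma chain_step (m : ℕ) (hm : m ≤ 4) :
    Ideal.span {(2 : ZMod 32) ^ (m + 1)} < Ideal.span {(2 : ZMod 32) ^ m} := by
  rw [lt_iff_le_and_ne]
  refine ⟨?_, ?_⟩
  · rw [Ideal.span_singleton_le_span_singleton]
    exact pow_dvd_pow 2 (Nat.le_succ m)
  · intro he
    have hmem : (2 : ZMod 32) ^ m ∈ Ideal.span {(2 : ZMod 32) ^ (m + 1)} := by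
      rw [he]
      exact Ideal.subset_span rfl
    rw [Ideal.mem_span_singleton'] at hmem
    revert hmem
    interval_cases m <;> decide

noncomputable def theChain : LTSeries (Ideal (ZMod 32)) :=
  ⟨5, fun k => Ideal.span {(2 : ZMod 32) ^ (5 - (k : ℕ))}, by
    intro i
    have hi : (i : ℕ) < 5 := i.isLt
    have h1 : 5 - ((i.castSucc : Fin 6) : ℕ) = (4 - (i : ℕ)) + 1 := by
      simp only [Fin.coe_castSucc]
      omega
    have h2 : 5 - ((i.succ : Fin 6) : ℕ) = 4 - (i : ℕ) := by
      simp only [Fin.val_succ]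
      omega
    change Ideal.span {(2 : ZMod 32) ^ (5 - ((i.castSucc : Fin 6) : ℕ))} <
      Ideal.span {(2 : ZMod 32) ^ (5 - ((i.succ : Fin 6) : ℕ))}
    rw [h1, h2]
    exact chain_step (4 - (i : ℕ)) (by omega)⟩

lemma card_lt {I₁ I₂ : Ideal (ZMod 32)} (h : I₁ < I₂) : Nat.card I₁ < Nat.card I₂ := by
  have hss : (I₁ : Set (ZMod 32)) ⊂ (I₂ : Set (ZMod 32)) := by
    rw [Set.ssubset_iff_of_subset (by exact_mod_cast h.le)]
    obtain ⟨t, ht2, ht1⟩ := SetLike.exists_of_lt h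
    exact ⟨t, ht2, ht1⟩
  have e1 : Nat.card I₁ = (I₁ : Set (ZMod 32)).ncard := Nat.card_coe_set_eq _
  have e2 : Nat.card I₂ = (I₂ : Set (ZMod 32)).ncard := Nat.card_coe_set_eq _
  rw [e1, e2]
  exact Set.ncard_lt_ncard hss (Set.toFinite _)

lemma card_dvd (I : Ideal (ZMod 32)) : Nat.card I ∣ 32 := by
  have h := AddSubgroup.card_addSubgroup_dvd_card (I.toAddSubgroup)
  simpa [Nat.card_zmod] using h

lemma krull_upper : Order.krullDim (Ideal (ZMod 32)) ≤ 5 := by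
  apply iSup_le
  intro s
  have hlen : s.length ≤ 5 := by
    let g : Fin (s.length + 1) → {d // d ∈ Nat.divisors 32} := fun k =>
      ⟨Nat.card (s k), Nat.mem_divisors.mpr ⟨card_dvd _, by norm_num⟩⟩
    have ginj : Function.Injective g := by
      have hm : StrictMono fun k => Nat.card (s k) :=
        fun a b hab => card_lt (s.strictMono hab)
      intro a b hab
      exact hm.injective (congrArg Subtype.val hab)
    have hcard := Fintype.card_le_of_injective g ginj
    rw [Fintype.card_fin, Fintype.card_coe] at hcard
    have h6 : (Nat.divisors 32).card = 6 := by decide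
    omega
  exact_mod_cast hlen

lemma krull_ideal_zmod : Order.krullDim (Ideal (ZMod 32)) = 5 := by
  apply le_antisymm krull_upper
  have := Order.LTSeries.length_le_krullDim theChain
  have hl : theChain.length = 5 := rfl
  rw [hl] at this
  exact_mod_cast this

lemma krull_final : Order.krullDim (Submodule O Q) = 5 :=
  (Order.krullDim_eq_of_orderIso G).trans krull_ideal_zmod

end EC

/-- The ideal `p = (2, X, Y)` of `R` is maximal and, with `O` the localization of
`R` at `p`, the length of the `O`-module `O/(Y − 16, Y + 16)O` equals `5`:  here the
length is expressed as the Krull dimension of the lattice of `O`-submodules.  This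
is the local intersection number `m₂₄ = i_{x₂₄}(S₂, S₄)`. -/
theorem local_intersection_number_eq_five :
    ∃ hp : p.IsMaximal,
      Order.krullDim
        (Submodule (@Localization.AtPrime R _ p hp.isPrime)
          ((@Localization.AtPrime R _ p hp.isPrime) ⧸
            (Ideal.span {algebraMap R _ (y - 16), algebraMap R _ (y + 16)} :
              @Ideal (@Localization.AtPrime R _ p hp.isPrime) Ring.toSemiring))) = 5 :=
  ⟨EC.hp, EC.krull_final⟩
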